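/- Let L be a Leibniz algebra over F, (l,r,V) a representation of L, A a subspace of L, and x an element of the normalizer n_L(A). Then for every integer k ≥ 0 and every a ∈ A, the endomorphism β_{k+1} = r_x^{k+1}∘r_a - r_a∘r_x^{k+1} belongs to the subspace r_A r_x^k + r_A r_x^{k-1} + ⋯ + r_A r_x + r_A of End(V), where r_A r_x^j denotes the span of {r_b∘r_x^j : b ∈ A}. -/
import Mathlib


/-- Let `(l,r,V)` be a representation of a Leibniz algebra `L`,
`A` a subspace of `L` and `x ∈ n_L(A)`.  Then for every `k ≥ 0` and every
`a ∈ A`, the endomorphism `β_{k+1} = r_x^{k+1}∘r_a - r_a∘r_x^{k+1}` lies in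
`r_A r_x^k + r_A r_x^{k-1} + ⋯ + r_A r_x + r_A`, where `r_A = A.map r` and
`r_A r_x^j` is the span of `{r_b ∘ r_x^j : b ∈ A}`. -/
theorem beta_mem_sum
    (F L V : Type*) [Field F]
    [AddCommGroup L] [Module F L]
    [AddCommGroup V] [Module F V]
    (b : L →ₗ[F] L →ₗ[F] L)
    (hb : ∀ x y z : L, b x (b y z) = b (b x y) z - b (b x z) y)
    (l r : L →ₗ[F] Module.End F V)
    (hr : ∀ x y : L, r (b x y) = r y * r x - r x * r y)
    (hlr : ∀ x y : L, l (b x y) = r y * l x - l x * r y)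
    (hll : ∀ x y : L, l (b x y) = r y * l x + l x * l y)
    (A : Submodule F L) (x : L)
    (hx : ∀ a ∈ A, b x a ∈ A ∧ b a x ∈ A) :
    ∀ (k : ℕ), ∀ a ∈ A,
      (r x) ^ (k + 1) * r a - r a * (r x) ^ (k + 1) ∈
        ⨆ j ∈ Finset.range (k + 1), A.map r * Submodule.span F {(r x) ^ j} := by
  intro k
  induction k with
  | zero =>
    intro a ha
    have hrc : r x ^ (0 + 1) * r a - r a * r x ^ (0 + 1) = r (b a x) := by
      rw [hr a x, pow_one]
    rw [hrc]
    have h0 : A.map r * Submodule.span F {(r x) ^ 0} ≤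
        ⨆ j ∈ Finset.range 1, A.map r * Submodule.span F {(r x) ^ j} :=
      le_iSup₂ (f := fun j (_ : j ∈ Finset.range 1) =>
        A.map r * Submodule.span F {(r x) ^ j}) 0 (by simp)
    apply h0
    have : r (b a x) = r (b a x) * (r x) ^ 0 := by simp
    rw [this]
    exact Submodule.mul_mem_mul ⟨b a x, (hx a ha).2, rfl⟩
      (Submodule.mem_span_singleton_self _)
  | succ k ih =>
    intro a ha
    have hc : b a x ∈ A := (hx a ha).2
    have hrc : r x * r a - r a * r x = r (b a x) := (hr a x).symm
    have key : r x ^ (k + 1 + 1) * r a - r a * r x ^ (k + 1 + 1) =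
        (r x ^ (k + 1) * r a - r a * r x ^ (k + 1)) * r x
        + (r x ^ (k + 1) * r (b a x) - r (b a x) * r x ^ (k + 1))
        + r (b a x) * r x ^ (k + 1) := by
      rw [← hrc, pow_succ (r x) (k+1)]
      noncomm_ring
    rw [key]
    refine add_mem (add_mem ?_ ?_) ?_
    · -- (β_{k+1}(a)) * r x
      have h1 : (⨆ j ∈ Finset.range (k + 1),
            A.map r * Submodule.span F {(r x) ^ j}) * Submodule.span F {r x} ≤
          ⨆ j ∈ Finset.range (k + 2), A.map r * Submodule.span F {(r x) ^ j} := by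
        rw [Submodule.iSup_mul]
        refine iSup_le fun j => ?_
        rw [Submodule.iSup_mul]
        refine iSup_le fun hj => ?_
        rw [mul_assoc, Submodule.span_mul_span, Set.singleton_mul_singleton,
          ← pow_succ]
        exact le_iSup₂ (f := fun j (_ : j ∈ Finset.range (k + 2)) =>
          A.map r * Submodule.span F {(r x) ^ j}) (j + 1)
          (by simp at hj ⊢; omega)
      exact h1 (Submodule.mul_mem_mul (ih a ha) (Submodule.mem_span_singleton_self _))
    · -- β_{k+1}(b a x)
      have h2 : (⨆ j ∈ Finset.range (k + 1),
            A.map r * Submodule.span F {(r x) ^ j}) ≤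
          ⨆ j ∈ Finset.range (k + 2), A.map r * Submodule.span F {(r x) ^ j} := by
        refine iSup₂_le fun j hj => ?_
        exact le_iSup₂ (f := fun j (_ : j ∈ Finset.range (k + 2)) =>
          A.map r * Submodule.span F {(r x) ^ j}) j (by simp at hj ⊢; omega)
      exact h2 (ih _ hc)
    · have h3 : A.map r * Submodule.span F {(r x) ^ (k + 1)} ≤
          ⨆ j ∈ Finset.range (k + 2), A.map r * Submodule.span F {(r x) ^ j} :=
        le_iSup₂ (f := fun j (_ : j ∈ Finset.range (k + 2)) =>
          A.map r * Submodule.span F {(r x) ^ j}) (k + 1) (by simp)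
      exact h3 (Submodule.mul_mem_mul ⟨b a x, hc, rfl⟩
        (Submodule.mem_span_singleton_self _))
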